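/- arXiv:2010.04583 — 2 statements merged into one kernel-verified Lean document; each statement's English description precedes it below -/
import Mathlib

section
/- For every map u from the set of edges to {−1,1} and every integer t ≥ 1, Σ_{x∈ℤ} P(x,t,u) = 1. -/
open scoped BigOperators

/-- The final x-coordinate of a checker path from `(0,0)` encoded by its sequence of moves
(`true` = move `(1,1)`, `false` = move `(-1,1)`). -/
def moveEndpoint {n : ℕ} (d : Fin n → Bool) : ℤ :=
  ∑ k, (if d k then (1 : ℤ) else -1)

/-- The number of turns of a checker path encoded by its sequence of moves. -/
def nturns {n : ℕ} (d : Fin n → Bool) : ℕ :=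
  ((List.ofFn d).zip (List.ofFn d).tail).countP fun p => p.1 != p.2

/-- Checker paths from `(0,0)` to `(x,t)` whose first step is to `(1,1)`,
encoded by their sequences of moves. -/
def cpaths (x t : ℤ) : Finset (Fin t.toNat → Bool) :=
  Finset.univ.filter fun d => moveEndpoint d = x ∧ (List.ofFn d).headI = true

/-- The x-coordinate of the `k`-th point of the path encoded by moves `d`. -/
def cpos {n : ℕ} (d : Fin n → Bool) (k : Fin n) : ℤ :=
  ∑ j ∈ Finset.univ.filter (fun j : Fin n => (j : ℕ) < (k : ℕ)), (if d j then (1 : ℤ) else -1)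

/-- Product of the values of the field `u` over the edges of the path encoded by `d`.
Here `u x t` denotes the value of the field on the edge with midpoint `(x + 1/2, t + 1/2)`. -/
def fieldWeight (u : ℤ → ℤ → ℝ) {n : ℕ} (d : Fin n → Bool) : ℝ :=
  ∏ k : Fin n, (if d k then u (cpos d k) (k : ℕ) else u (cpos d k - 1) (k : ℕ))

/-- Feynman checkers amplitude `a(x,t,u)` in an external field `u`, where `u x t` is
the value of the field on the edge with midpoint `(x + 1/2, t + 1/2)`. -/
noncomputable def af (u : ℤ → ℤ → ℝ) (x t : ℤ) : ℂ :=
  (Real.sqrt 2 : ℂ) ^ (1 - t) * Complex.I *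
    ∑ d ∈ cpaths x t, (-Complex.I) ^ nturns d * (fieldWeight u d : ℂ)


def cpathsN (x : ℤ) (n : ℕ) : Finset (Fin n → Bool) :=
  Finset.univ.filter fun d => moveEndpoint d = x ∧ (List.ofFn d).headI = true

def Tn (l : List Bool) : ℕ := (l.zip l.tail).countP fun p => p.1 != p.2

lemma nturns_eq {n : ℕ} (d : Fin n → Bool) : nturns d = Tn (List.ofFn d) := rfl

lemma Tn_cons_cons (a b : Bool) (l : List Bool) :
    Tn (a :: b :: l) = (if a != b then 1 else 0) + Tn (b :: l) := by
  simp [Tn, List.countP_cons]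
  cases a <;> cases b <;> simp [Nat.add_comm]

lemma nturns_formula : ∀ {n : ℕ} (d : Fin (n+1) → Bool),
    nturns d = ∑ k : Fin n, (if d k.castSucc != d k.succ then 1 else 0) := by
  intro n
  induction n with
  | zero => intro d; simp [nturns, List.ofFn_succ, Tn]
  | succ n ih =>
    intro d
    have h : nturns d
        = (if d 0 != d (Fin.succ 0) then 1 else 0) + nturns (fun i : Fin (n+1) => d i.succ) := by
      rw [nturns_eq, nturns_eq]
      simp only [List.ofFn_succ]
      rw [Tn_cons_cons]
    rw [h, ih (fun i => d i.succ), Fin.sum_univ_succ]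
    congr 1

lemma nturns_snoc {n : ℕ} (d' : Fin (n+1) → Bool) (b : Bool) :
    nturns (Fin.snoc d' b) = nturns d' + (if d' (Fin.last n) != b then 1 else 0) := by
  rw [nturns_formula, nturns_formula, Fin.sum_univ_castSucc]
  congr 1
  · apply Finset.sum_congr rfl
    intro k _
    rw [Fin.succ_castSucc, Fin.snoc_castSucc, Fin.snoc_castSucc]
  · rw [Fin.succ_last, Fin.snoc_castSucc, Fin.snoc_last]

lemma nturns_even {n : ℕ} (d : Fin (n+1) → Bool) :
    Even (nturns d) ↔ d 0 = d (Fin.last n) := by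
  rw [nturns_formula]
  induction n with
  | zero => simp [Fin.last]
  | succ n ih =>
    rw [Fin.sum_univ_castSucc]
    have h := ih (fun i => d i.castSucc)
    simp only [Fin.castSucc_zero] at h
    have hterm : ∀ k : Fin n,
        (if d (k.castSucc).castSucc != d (k.castSucc).succ then 1 else 0)
          = (if (fun i : Fin (n+1) => d i.castSucc) k.castSucc
              != (fun i : Fin (n+1) => d i.castSucc) k.succ then 1 else 0) := by
      intro k; rw [Fin.succ_castSucc]
    rw [Finset.sum_congr rfl (fun k _ => hterm k), Nat.even_add, h, Fin.succ_last]
    cases hd0 : d 0 <;> cases hm : d ((Fin.last n).castSucc) <;> cases hl : d (Fin.last (n+1)) <;>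
      simp [hd0, hm, hl]

lemma moveEndpoint_snoc {n : ℕ} (d' : Fin n → Bool) (b : Bool) :
    moveEndpoint (Fin.snoc d' b) = moveEndpoint d' + (if b then 1 else -1) := by
  unfold moveEndpoint
  rw [Fin.sum_univ_castSucc]
  simp

lemma headI_ofFn {n : ℕ} (d : Fin (n+1) → Bool) : (List.ofFn d).headI = d 0 := by
  rw [List.ofFn_succ]; rfl

lemma abs_moveEndpoint {n : ℕ} (d : Fin n → Bool) : |moveEndpoint d| ≤ (n : ℤ) := by
  unfold moveEndpoint
  refine (Finset.abs_sum_le_sum_abs _ _).trans ?_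
  have : ∀ k : Fin n, |if d k then (1:ℤ) else -1| ≤ 1 := by
    intro k; split <;> simp
  refine (Finset.sum_le_sum fun k _ => this k).trans ?_
  simp

lemma cpos_snoc {n : ℕ} (d' : Fin (n+1) → Bool) (b : Bool) (k : Fin (n+1)) :
    cpos (Fin.snoc d' b) k.castSucc = cpos d' k := by
  unfold cpos
  rw [Finset.sum_filter, Finset.sum_filter, Fin.sum_univ_castSucc]
  have hk : ¬ ((n+1 : ℕ) < (k : ℕ)) := by have := k.isLt; omega
  simp only [Fin.snoc_castSucc, Fin.coe_castSucc, Fin.val_last, if_neg hk, add_zero]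

lemma cpos_snoc_last {n : ℕ} (d' : Fin (n+1) → Bool) (b : Bool) :
    cpos (Fin.snoc d' b) (Fin.last (n+1)) = moveEndpoint d' := by
  unfold cpos moveEndpoint
  rw [Finset.sum_filter, Fin.sum_univ_castSucc]
  have hk : ¬ ((n+1 : ℕ) < (n+1 : ℕ)) := lt_irrefl _
  simp only [Fin.snoc_castSucc, Fin.coe_castSucc, Fin.val_last, if_neg hk, add_zero]
  apply Finset.sum_congr rfl
  intro j _
  rw [if_pos j.isLt]

lemma fieldWeight_snoc (u : ℤ → ℤ → ℝ) {n : ℕ} (d' : Fin (n+1) → Bool) (b : Bool) :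
    fieldWeight u (Fin.snoc d' b)
      = fieldWeight u d' *
        (if b then u (moveEndpoint d') (n+1) else u (moveEndpoint d' - 1) (n+1)) := by
  unfold fieldWeight
  rw [Fin.prod_univ_castSucc]
  congr 1
  · apply Finset.prod_congr rfl
    intro k _
    rw [cpos_snoc, Fin.snoc_castSucc, Fin.coe_castSucc]
  · rw [cpos_snoc_last, Fin.snoc_last, Fin.val_last]; norm_cast

lemma snoc_zero' {n : ℕ} (d' : Fin (n+1) → Bool) (c : Bool) :
    Fin.snoc (α := fun _ : Fin (n+2) => Bool) d' c 0 = d' 0 := by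
  rw [show (0 : Fin (n+2)) = Fin.castSucc 0 from rfl, Fin.snoc_castSucc]

noncomputable def S (u : ℤ → ℤ → ℝ) (n : ℕ) (x : ℤ) (b : Bool) : ℂ :=
  ∑ d ∈ (cpathsN x (n+1)).filter (fun d => d (Fin.last n) = b),
    (-Complex.I) ^ nturns d * (fieldWeight u d : ℂ)

lemma S_eq_sum_ite (u : ℤ → ℤ → ℝ) (n : ℕ) (x : ℤ) (b : Bool) :
    S u n x b = ∑ d : Fin (n+1) → Bool,
      if moveEndpoint d = x ∧ d 0 = true ∧ d (Fin.last n) = b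
      then (-Complex.I) ^ nturns d * (fieldWeight u d : ℂ) else 0 := by
  unfold S cpathsN
  rw [Finset.filter_filter, Finset.sum_filter]
  apply Finset.sum_congr rfl
  intro d _
  simp only [headI_ofFn, and_assoc]

lemma S_succ_true (u : ℤ → ℤ → ℝ) (n : ℕ) (x : ℤ) :
    S u (n+1) x true = ((u (x-1) ((n:ℤ)+1) : ℝ) : ℂ) *
      (S u n (x-1) true + (-Complex.I) * S u n (x-1) false) := by
  rw [S_eq_sum_ite, S_eq_sum_ite, S_eq_sum_ite]
  rw [← Equiv.sum_comp (Fin.snocEquiv (fun _ : Fin (n+2) => Bool))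
    (fun d : Fin (n+2) → Bool =>
      if moveEndpoint d = x ∧ d 0 = true ∧ d (Fin.last (n+1)) = true
      then (-Complex.I) ^ nturns d * (fieldWeight u d : ℂ) else 0)]
  rw [Fintype.sum_prod_type, Fintype.sum_bool]
  have hsnoc : ∀ (c : Bool) (d' : Fin (n+1) → Bool),
      (Fin.snocEquiv (fun _ : Fin (n+2) => Bool)) (c, d') = Fin.snoc d' c := fun _ _ => rfl
  simp only [hsnoc]
  simp only [mul_add, Finset.mul_sum]
  rw [← Finset.sum_add_distrib, ← Finset.sum_add_distrib]
  apply Finset.sum_congr rfl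
  intro d' _
  simp only [moveEndpoint_snoc, snoc_zero', Fin.snoc_last, nturns_snoc, fieldWeight_snoc]
  by_cases hme : moveEndpoint d' = x - 1
  · by_cases h0 : d' 0 = true
    · have hx : moveEndpoint d' + 1 = x := by omega
      cases hl : d' (Fin.last n)
      · simp only [hme, h0, hl, hx]
        norm_num [pow_succ]
        push_cast
        ring
      · simp only [hme, h0, hl, hx]
        norm_num
        push_cast
        ring
    · simp [snoc_zero', h0]
  · have hx : ¬ (moveEndpoint d' + 1 = x) := by omega
    simp [hme, hx]

lemma S_succ_false (u : ℤ → ℤ → ℝ) (n : ℕ) (x : ℤ) :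
    S u (n+1) x false = ((u x ((n:ℤ)+1) : ℝ) : ℂ) *
      ((-Complex.I) * S u n (x+1) true + S u n (x+1) false) := by
  rw [S_eq_sum_ite, S_eq_sum_ite, S_eq_sum_ite]
  rw [← Equiv.sum_comp (Fin.snocEquiv (fun _ : Fin (n+2) => Bool))
    (fun d : Fin (n+2) → Bool =>
      if moveEndpoint d = x ∧ d 0 = true ∧ d (Fin.last (n+1)) = false
      then (-Complex.I) ^ nturns d * (fieldWeight u d : ℂ) else 0)]
  rw [Fintype.sum_prod_type, Fintype.sum_bool]
  have hsnoc : ∀ (c : Bool) (d' : Fin (n+1) → Bool),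
      (Fin.snocEquiv (fun _ : Fin (n+2) => Bool)) (c, d') = Fin.snoc d' c := fun _ _ => rfl
  simp only [hsnoc]
  simp only [mul_add, Finset.mul_sum]
  rw [← Finset.sum_add_distrib, ← Finset.sum_add_distrib]
  apply Finset.sum_congr rfl
  intro d' _
  simp only [moveEndpoint_snoc, snoc_zero', Fin.snoc_last, nturns_snoc, fieldWeight_snoc]
  by_cases hme : moveEndpoint d' = x + 1
  · by_cases h0 : d' 0 = true
    · have hx : moveEndpoint d' + -1 = x := by omega
      have hx1 : moveEndpoint d' - 1 = x := by omega
      cases hl : d' (Fin.last n)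
      · simp only [hme, h0, hl, hx, hx1]
        norm_num
        push_cast
        ring
      · simp only [hme, h0, hl, hx, hx1]
        norm_num [pow_succ]
        push_cast
        ring
    · simp [snoc_zero', h0]
  · have hx : ¬ (moveEndpoint d' + -1 = x) := by omega
    simp [hme, hx]

lemma abs_u (u : ℤ → ℤ → ℝ) (hu : ∀ x t : ℤ, u x t = 1 ∨ u x t = -1) (x t : ℤ) :
    ‖((u x t : ℝ) : ℂ)‖ = 1 := by
  rcases hu x t with h | h <;> simp [h]

lemma S_zero_true (u : ℤ → ℤ → ℝ) (x : ℤ) :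
    S u 0 x true = if x = 1 then ((u 0 0 : ℝ) : ℂ) else 0 := by
  rw [S_eq_sum_ite]
  rw [← Equiv.sum_comp (Equiv.funUnique (Fin 1) Bool).symm, Fintype.sum_bool]
  have h1 : moveEndpoint (fun _ : Fin 1 => true) = 1 := by decide
  have h2 : nturns (fun _ : Fin 1 => true) = 0 := by decide
  have h3 : fieldWeight u (fun _ : Fin 1 => true) = u 0 0 := by
    unfold fieldWeight
    rw [Fin.prod_univ_one]
    have : cpos (fun _ : Fin 1 => true) 0 = 0 := by
      unfold cpos; simp
    simp [this]
  have he : ∀ c : Bool, (Equiv.funUnique (Fin 1) Bool).symm c = fun _ : Fin 1 => c :=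
    fun _ => rfl
  simp only [he, h1, h2, h3]
  simp [eq_comm]

lemma S_zero_false (u : ℤ → ℤ → ℝ) (x : ℤ) : S u 0 x false = 0 := by
  rw [S_eq_sum_ite]
  rw [← Equiv.sum_comp (Equiv.funUnique (Fin 1) Bool).symm, Fintype.sum_bool]
  have he : ∀ c : Bool, (Equiv.funUnique (Fin 1) Bool).symm c = fun _ : Fin 1 => c :=
    fun _ => rfl
  simp only [he]
  simp

lemma S_true_im (u : ℤ → ℤ → ℝ) (n : ℕ) (x : ℤ) : (S u n x true).im = 0 := by
  unfold S
  rw [Complex.im_sum]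
  apply Finset.sum_eq_zero
  intro d hd
  rw [Finset.mem_filter] at hd
  have hd1 := hd.1
  rw [cpathsN, Finset.mem_filter, headI_ofFn] at hd1
  have he : Even (nturns d) := (nturns_even d).mpr (by rw [hd1.2.2, hd.2])
  obtain ⟨k, hk⟩ := he
  rw [hk, ← two_mul, pow_mul]
  have h2 : (-Complex.I) ^ 2 = -1 := by
    rw [neg_sq, Complex.I_sq]
  rw [h2]
  have h3 : ((-1 : ℂ)) ^ k = (((-1 : ℝ)) ^ k : ℝ) := by norm_cast
  rw [h3, ← Complex.ofReal_mul, Complex.ofReal_im]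

lemma S_false_re (u : ℤ → ℤ → ℝ) (n : ℕ) (x : ℤ) : (S u n x false).re = 0 := by
  unfold S
  rw [Complex.re_sum]
  apply Finset.sum_eq_zero
  intro d hd
  rw [Finset.mem_filter] at hd
  have hd1 := hd.1
  rw [cpathsN, Finset.mem_filter, headI_ofFn] at hd1
  have ho : ¬ Even (nturns d) := by
    rw [nturns_even d, hd1.2.2, hd.2]; simp
  obtain ⟨k, hk⟩ := Nat.not_even_iff_odd.mp ho
  rw [hk, pow_add, pow_mul]
  have h2 : (-Complex.I) ^ 2 = -1 := by rw [neg_sq, Complex.I_sq]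
  rw [h2, pow_one]
  have h3 : ((-1 : ℂ)) ^ k = (((-1 : ℝ)) ^ k : ℝ) := by norm_cast
  have h4 : ((-1:ℂ))^k * -Complex.I * ((fieldWeight u d : ℝ) : ℂ)
      = -((((-1:ℝ))^k * fieldWeight u d : ℝ) * Complex.I) := by
    rw [h3]; push_cast; ring
  rw [h4, Complex.neg_re, Complex.mul_re, Complex.ofReal_re, Complex.ofReal_im,
    Complex.I_re, Complex.I_im]
  ring

lemma S_support (u : ℤ → ℤ → ℝ) (n : ℕ) (x : ℤ) (b : Bool) (h : (n:ℤ)+1 < |x|) :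
    S u n x b = 0 := by
  unfold S
  apply Finset.sum_eq_zero
  intro d hd
  rw [Finset.mem_filter] at hd
  have hd1 := hd.1
  rw [cpathsN, Finset.mem_filter] at hd1
  have hb := abs_moveEndpoint d
  rw [hd1.2.1] at hb
  exfalso
  push_cast at hb
  linarith

lemma summable_sq (f : ℤ → ℂ) (n : ℕ) (hf : ∀ x : ℤ, (n:ℤ) < |x| → f x = 0) :
    Summable (fun x : ℤ => ‖f x‖ ^ 2) := by
  apply summable_of_ne_finset_zero (s := Finset.Icc (-(n:ℤ)) n)
  intro x hx
  rw [Finset.mem_Icc] at hx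
  have habs : (n:ℤ) < |x| := by
    rcases abs_cases x with ⟨h1, h2⟩ | ⟨h1, h2⟩ <;> omega
  rw [hf x habs]
  simp

lemma unit_step (a b : ℂ) :
    ‖a + (-Complex.I) * b‖ ^ 2 + ‖(-Complex.I) * a + b‖ ^ 2
      = 2 * (‖a‖ ^ 2 + ‖b‖ ^ 2) := by
  simp only [Complex.sq_norm, Complex.normSq_apply, Complex.add_re, Complex.add_im,
    Complex.mul_re, Complex.mul_im, Complex.neg_re, Complex.neg_im, Complex.I_re, Complex.I_im]
  ring

lemma abs_add_sq_orth (z w : ℂ) (hz : z.im = 0) (hw : w.re = 0) :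
    ‖z + w‖ ^ 2 = ‖z‖ ^ 2 + ‖w‖ ^ 2 := by
  simp only [Complex.sq_norm, Complex.normSq_apply, Complex.add_re, Complex.add_im, hz, hw]
  ring

lemma S_sum_combo_support_t (u : ℤ → ℤ → ℝ) (n : ℕ) :
    ∀ x : ℤ, ((n:ℤ)+1) < |x| →
      S u n x true + (-Complex.I) * S u n x false = 0 := by
  intro x hx
  rw [S_support u n x true (by omega), S_support u n x false (by omega)]
  ring

lemma S_sum_combo_support_f (u : ℤ → ℤ → ℝ) (n : ℕ) :
    ∀ x : ℤ, ((n:ℤ)+1) < |x| →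
      (-Complex.I) * S u n x true + S u n x false = 0 := by
  intro x hx
  rw [S_support u n x true (by omega), S_support u n x false (by omega)]
  ring

lemma S_single_support (u : ℤ → ℤ → ℝ) (n : ℕ) (b : Bool) :
    ∀ x : ℤ, ((n:ℤ)+1) < |x| → S u n x b = 0 :=
  fun x hx => S_support u n x b (by omega)

set_option maxHeartbeats 1000000 in
lemma cons_step (u : ℤ → ℤ → ℝ) (hu : ∀ x t : ℤ, u x t = 1 ∨ u x t = -1) (n : ℕ) :
    ∑' x : ℤ, (‖S u (n+1) x true‖ ^ 2 + ‖S u (n+1) x false‖ ^ 2)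
      = 2 * ∑' x : ℤ, (‖S u n x true‖ ^ 2 + ‖S u n x false‖ ^ 2) := by
  have hT : ∀ x : ℤ, ‖S u (n+1) x true‖ ^ 2
      = ‖S u n (x-1) true + (-Complex.I) * S u n (x-1) false‖ ^ 2 := by
    intro x
    rw [S_succ_true, norm_mul, abs_u u hu, one_mul]
  have hF : ∀ x : ℤ, ‖S u (n+1) x false‖ ^ 2
      = ‖(-Complex.I) * S u n (x+1) true + S u n (x+1) false‖ ^ 2 := by
    intro x
    rw [S_succ_false, norm_mul, abs_u u hu, one_mul]
  have s1 : Summable (fun x : ℤ =>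
      ‖S u n x true + (-Complex.I) * S u n x false‖ ^ 2) :=
    summable_sq _ (n+1) (by push_cast; exact S_sum_combo_support_t u n)
  have s2 : Summable (fun x : ℤ =>
      ‖(-Complex.I) * S u n x true + S u n x false‖ ^ 2) :=
    summable_sq _ (n+1) (by push_cast; exact S_sum_combo_support_f u n)
  have s1' : Summable (fun x : ℤ =>
      ‖S u n (x-1) true + (-Complex.I) * S u n (x-1) false‖ ^ 2) :=
    summable_sq _ (n+2) (fun x hx => S_sum_combo_support_t u n (x-1)
      (by push_cast at hx ⊢; rcases abs_cases x with ⟨h1,h2⟩|⟨h1,h2⟩ <;>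
        rcases abs_cases (x-1) with ⟨h3,h4⟩|⟨h3,h4⟩ <;> omega))
  have s2' : Summable (fun x : ℤ =>
      ‖(-Complex.I) * S u n (x+1) true + S u n (x+1) false‖ ^ 2) :=
    summable_sq _ (n+2) (fun x hx => S_sum_combo_support_f u n (x+1)
      (by push_cast at hx ⊢; rcases abs_cases x with ⟨h1,h2⟩|⟨h1,h2⟩ <;>
        rcases abs_cases (x+1) with ⟨h3,h4⟩|⟨h3,h4⟩ <;> omega))
  calc ∑' x : ℤ, (‖S u (n+1) x true‖ ^ 2 + ‖S u (n+1) x false‖ ^ 2)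
      = ∑' x : ℤ, (‖S u n (x-1) true + (-Complex.I) * S u n (x-1) false‖ ^ 2
          + ‖(-Complex.I) * S u n (x+1) true + S u n (x+1) false‖ ^ 2) :=
        tsum_congr fun x => by rw [hT, hF]
    _ = (∑' x : ℤ, ‖S u n (x-1) true + (-Complex.I) * S u n (x-1) false‖ ^ 2)
          + ∑' x : ℤ, ‖(-Complex.I) * S u n (x+1) true + S u n (x+1) false‖ ^ 2 :=
        Summable.tsum_add s1' s2'
    _ = (∑' x : ℤ, ‖S u n x true + (-Complex.I) * S u n x false‖ ^ 2)
          + ∑' x : ℤ, ‖(-Complex.I) * S u n x true + S u n x false‖ ^ 2 := by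
        have e1 : (∑' x : ℤ, ‖S u n (x-1) true + (-Complex.I) * S u n (x-1) false‖ ^ 2)
            = ∑' x : ℤ, ‖S u n x true + (-Complex.I) * S u n x false‖ ^ 2 :=
          (Equiv.subRight (1:ℤ)).tsum_eq
            (fun y : ℤ => ‖S u n y true + (-Complex.I) * S u n y false‖ ^ 2)
        have e2 : (∑' x : ℤ, ‖(-Complex.I) * S u n (x+1) true + S u n (x+1) false‖ ^ 2)
            = ∑' x : ℤ, ‖(-Complex.I) * S u n x true + S u n x false‖ ^ 2 :=
          (Equiv.addRight (1:ℤ)).tsum_eq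
            (fun y : ℤ => ‖(-Complex.I) * S u n y true + S u n y false‖ ^ 2)
        rw [e1, e2]
    _ = ∑' x : ℤ, (‖S u n x true + (-Complex.I) * S u n x false‖ ^ 2
          + ‖(-Complex.I) * S u n x true + S u n x false‖ ^ 2) :=
        (Summable.tsum_add s1 s2).symm
    _ = ∑' x : ℤ, 2 * (‖S u n x true‖ ^ 2 + ‖S u n x false‖ ^ 2) :=
        tsum_congr fun x => unit_step _ _
    _ = 2 * ∑' x : ℤ, (‖S u n x true‖ ^ 2 + ‖S u n x false‖ ^ 2) :=
        tsum_mul_left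

lemma cons_base (u : ℤ → ℤ → ℝ) (hu : ∀ x t : ℤ, u x t = 1 ∨ u x t = -1) :
    ∑' x : ℤ, (‖S u 0 x true‖ ^ 2 + ‖S u 0 x false‖ ^ 2) = 1 := by
  have h : ∀ x : ℤ, ‖S u 0 x true‖ ^ 2 + ‖S u 0 x false‖ ^ 2
      = if x = 1 then (1:ℝ) else 0 := by
    intro x
    rw [S_zero_true, S_zero_false]
    split_ifs with hx
    · simp [abs_u u hu, hu 0 0]
    · simp
  rw [tsum_congr h, tsum_ite_eq]

lemma cons_all (u : ℤ → ℤ → ℝ) (hu : ∀ x t : ℤ, u x t = 1 ∨ u x t = -1) (n : ℕ) :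
    ∑' x : ℤ, (‖S u n x true‖ ^ 2 + ‖S u n x false‖ ^ 2)
      = 2 ^ n := by
  induction n with
  | zero => simpa using cons_base u hu
  | succ n ih => rw [cons_step u hu, ih]; ring

lemma af_split (u : ℤ → ℤ → ℝ) (n : ℕ) (x : ℤ) :
    af u x (((n+1 : ℕ) : ℤ)) = (Real.sqrt 2 : ℂ) ^ ((1 : ℤ) - ((n+1 : ℕ) : ℤ)) * Complex.I *
      (S u n x true + S u n x false) := by
  unfold af
  congr 1
  have hc : cpaths x ((n+1 : ℕ) : ℤ) = cpathsN x (n+1) := rfl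
  rw [hc]
  unfold S
  have hsplit := Finset.sum_filter_add_sum_filter_not (cpathsN x (n+1))
    (fun d => d (Fin.last n) = true)
    (fun d => (-Complex.I) ^ nturns d * (fieldWeight u d : ℂ))
  have hfilter : Finset.filter (fun d => d (Fin.last n) = false) (cpathsN x (n+1))
      = Finset.filter (fun d => ¬ d (Fin.last n) = true) (cpathsN x (n+1)) :=
    Finset.filter_congr (fun d _ => by simp)
  rw [hfilter]
  exact hsplit.symm

lemma abs_af_sq (u : ℤ → ℤ → ℝ) (n : ℕ) (x : ℤ) :
    ‖af u x ((n+1 : ℕ) : ℤ)‖ ^ 2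
      = (2:ℝ) ^ (-(n:ℤ)) *
        (‖S u n x true‖ ^ 2 + ‖S u n x false‖ ^ 2) := by
  rw [af_split, norm_mul, norm_mul, mul_pow, mul_pow, Complex.norm_I, one_pow, mul_one]
  have h1 : ‖(Real.sqrt 2 : ℂ) ^ ((1 : ℤ) - ((n+1 : ℕ) : ℤ))‖
      = Real.sqrt 2 ^ ((1 : ℤ) - ((n+1 : ℕ) : ℤ)) := by
    rw [norm_zpow, Complex.norm_real, Real.norm_eq_abs, abs_of_nonneg (Real.sqrt_nonneg 2)]
  rw [h1]
  have he : (1 : ℤ) - ((n+1 : ℕ) : ℤ) = -(n:ℤ) := by push_cast; ring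
  have h2 : (Real.sqrt 2 ^ ((1 : ℤ) - ((n+1 : ℕ) : ℤ))) ^ (2:ℕ) = (2:ℝ) ^ (-(n:ℤ)) := by
    rw [he, ← zpow_natCast (Real.sqrt 2 ^ (-(n:ℤ))) 2, ← zpow_mul, mul_comm, zpow_mul]
    have hs : (Real.sqrt 2 : ℝ) ^ ((2:ℕ):ℤ) = 2 := by
      rw [zpow_natCast, Real.sq_sqrt (by norm_num : (0:ℝ) ≤ 2)]
    rw [hs]
  rw [h2]
  congr 1
  exact abs_add_sq_orth _ _ (S_true_im u n x) (S_false_re u n x)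


/-- Probability/charge conservation in an external field. -/
theorem probability_conservation_field (u : ℤ → ℤ → ℝ)
    (hu : ∀ x t : ℤ, u x t = 1 ∨ u x t = -1) (t : ℤ) (ht : 1 ≤ t) :
    ∑' x : ℤ, ‖af u x t‖ ^ 2 = 1 := by
  obtain ⟨n, rfl⟩ : ∃ n : ℕ, t = ((n + 1 : ℕ) : ℤ) := ⟨(t-1).toNat, by omega⟩
  have key : ∀ x : ℤ, ‖af u x ((n+1 : ℕ) : ℤ)‖ ^ 2
      = (2:ℝ) ^ (-(n:ℤ)) *
        (‖S u n x true‖ ^ 2 + ‖S u n x false‖ ^ 2) :=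
    abs_af_sq u n
  rw [tsum_congr key, tsum_mul_left, cons_all u hu n]
  rw [← zpow_natCast (2:ℝ) n, ← zpow_add₀ (by norm_num : (2:ℝ) ≠ 0)]
  norm_num
end

section
/- Let u be the map on edges with u(x+1/2, t+1/2) = (−1)^{(x−1)(t−1)} for all (x,t) ∈ ℤ². Then for each (x,t) ∈ ℤ² with t ≥ 1 such that either (x,t) ≡ (2,1) (mod 4) or (x,t) ≡ (0,3) (mod 4), the following hold: √2·a₁(x+1,t,u) = a₁(x,t−1,u) = √2·a₁(x−1,t,u) = a₁(x,t+1,u) = √2·a₂(x+1,t,u) = √2·a₂(x−1,t,u) − 2·a₂(x,t+1,u), and a₂(x,t−1,u) = 0. -/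
open scoped BigOperators

namespace DR

open Complex Finset

/-- last move of a path -/
def dlast {n : ℕ} (d : Fin n → Bool) : Bool := (List.ofFn d).getLastD false

noncomputable def Gc (u : ℤ → ℤ → ℝ) (x : ℤ) (n : ℕ) : ℂ :=
  ∑ d ∈ Finset.univ.filter
      (fun d : Fin n → Bool => moveEndpoint d = x ∧ (List.ofFn d).headI = true ∧ dlast d = true),
    (-Complex.I) ^ nturns d * (fieldWeight u d : ℂ)

noncomputable def Hc (u : ℤ → ℤ → ℝ) (x : ℤ) (n : ℕ) : ℂ :=
  ∑ d ∈ Finset.univ.filter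
      (fun d : Fin n → Bool => moveEndpoint d = x ∧ (List.ofFn d).headI = true ∧ dlast d = false),
    (-Complex.I) ^ nturns d * (fieldWeight u d : ℂ)

lemma dlast_eq {n : ℕ} (d : Fin (n+1) → Bool) : dlast d = d (Fin.last n) := by
  rw [dlast, List.ofFn_succ', List.concat_eq_append, List.getLastD_concat]

lemma dlast_snoc {n : ℕ} (e : Fin n → Bool) (b : Bool) : dlast (Fin.snoc e b) = b := by
  rw [dlast_eq, Fin.snoc_last]

lemma headI_ofFn {n : ℕ} (d : Fin (n+1) → Bool) : (List.ofFn d).headI = d 0 := by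
  rw [List.ofFn_succ]; rfl

lemma headI_snoc {n : ℕ} (e : Fin (n+1) → Bool) (b : Bool) :
    (List.ofFn (Fin.snoc e b : Fin (n+2) → Bool)).headI = (List.ofFn e).headI := by
  rw [headI_ofFn, headI_ofFn]
  have : (0 : Fin (n+2)) = Fin.castSucc 0 := rfl
  rw [this, Fin.snoc_castSucc]

lemma moveEndpoint_snoc {n : ℕ} (e : Fin n → Bool) (b : Bool) :
    moveEndpoint (Fin.snoc e b : Fin (n+1) → Bool)
      = moveEndpoint e + (if b then 1 else -1) := by
  rw [moveEndpoint, Fin.sum_univ_castSucc]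
  simp [moveEndpoint, Fin.snoc_castSucc, Fin.snoc_last]


lemma cpos_eq_ite {n : ℕ} (d : Fin n → Bool) (k : Fin n) :
    cpos d k = ∑ j : Fin n, if (j : ℕ) < (k : ℕ) then (if d j then (1 : ℤ) else -1) else 0 := by
  rw [cpos, Finset.sum_filter]

lemma cpos_snoc_castSucc {n : ℕ} (e : Fin n → Bool) (b : Bool) (k : Fin n) :
    cpos (Fin.snoc e b : Fin (n+1) → Bool) k.castSucc = cpos e k := by
  rw [cpos_eq_ite, cpos_eq_ite, Fin.sum_univ_castSucc]
  have h1 : ∀ j : Fin n, ((j.castSucc : Fin (n+1)) : ℕ) = (j : ℕ) := fun j => rfl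
  have h2 : ((k.castSucc : Fin (n+1)) : ℕ) = (k : ℕ) := rfl
  simp only [h1, h2, Fin.snoc_castSucc, Fin.val_last]
  have : ¬ (n < (k : ℕ)) := by omega
  simp [this]

lemma cpos_snoc_last {n : ℕ} (e : Fin n → Bool) (b : Bool) :
    cpos (Fin.snoc e b : Fin (n+1) → Bool) (Fin.last n) = moveEndpoint e := by
  rw [cpos_eq_ite, Fin.sum_univ_castSucc, moveEndpoint]
  have h1 : ∀ j : Fin n, ((j.castSucc : Fin (n+1)) : ℕ) = (j : ℕ) := fun j => rfl
  simp only [h1, Fin.snoc_castSucc, Fin.val_last, Fin.snoc_last]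
  have : ¬ (n < n) := by omega
  simp only [this, if_false, add_zero]
  exact Finset.sum_congr rfl (fun j _ => by simp [j.isLt])

lemma fieldWeight_snoc {n : ℕ} (e : Fin n → Bool) (b : Bool) :
    fieldWeight u (Fin.snoc e b : Fin (n+1) → Bool)
      = fieldWeight u e *
        (if b then u (moveEndpoint e) n else u (moveEndpoint e - 1) n) := by
  rw [fieldWeight, Fin.prod_univ_castSucc]
  congr 1
  · refine Finset.prod_congr rfl (fun k _ => ?_)
    rw [cpos_snoc_castSucc, Fin.snoc_castSucc]
    rfl
  · rw [cpos_snoc_last, Fin.snoc_last, Fin.val_last]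


def turnsL (l : List Bool) : ℕ := (l.zip l.tail).countP fun p => p.1 != p.2

lemma turnsL_append (b : Bool) :
    ∀ (l : List Bool), l ≠ [] →
      turnsL (l ++ [b]) = turnsL l + (if l.getLastD false = b then 0 else 1)
  | [], h => absurd rfl h
  | [a], _ => by
      simp only [turnsL, List.cons_append, List.nil_append, List.getLastD]
      cases a <;> cases b <;> simp [List.countP, List.countP.go]
  | a :: c :: r, _ => by
      have ih := turnsL_append b (c :: r) (by simp)
      have hz : ∀ (s : List Bool), turnsL (a :: c :: s) = turnsL (c :: s) + (if (a != c) = true then 1 else 0) := by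
        intro s
        simp only [turnsL, List.zip, List.tail_cons, List.zipWith_cons_cons, List.countP_cons]
      have h1 : a :: c :: r ++ [b] = a :: ((c :: r) ++ [b]) := by simp
      have h2 : (c :: r) ++ [b] = c :: (r ++ [b]) := by simp
      rw [h1, h2, hz (r ++ [b]), ← h2, ih, hz r]
      have h3 : (a :: c :: r).getLastD false = (c :: r).getLastD false := by
        cases r <;> simp [List.getLastD_cons]
      rw [h3]
      ring

lemma nturns_eq (n : ℕ) (d : Fin n → Bool) : nturns d = turnsL (List.ofFn d) := rfl

lemma nturns_snoc {n : ℕ} (e : Fin (n+1) → Bool) (b : Bool) :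
    nturns (Fin.snoc e b : Fin (n+2) → Bool)
      = nturns e + (if dlast e = b then 0 else 1) := by
  rw [nturns_eq, nturns_eq, List.ofFn_succ' (Fin.snoc e b), List.concat_eq_append]
  have h1 : (fun i : Fin (n+1) => (Fin.snoc e b : Fin (n+2) → Bool) i.castSucc) = e := by
    funext i; exact Fin.snoc_castSucc _ _ _
  rw [Fin.snoc_last, h1, turnsL_append b _ (by simp [List.ofFn_succ])]
  rfl


lemma sum_snoc_filter (n : ℕ) (x : ℤ) (b : Bool) (f : (Fin (n+2) → Bool) → ℂ) :
    ∑ d ∈ Finset.univ.filter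
        (fun d : Fin (n+2) → Bool =>
          moveEndpoint d = x ∧ (List.ofFn d).headI = true ∧ dlast d = b), f d
      = ∑ e ∈ Finset.univ.filter
          (fun e : Fin (n+1) → Bool =>
            moveEndpoint e = x - (if b then 1 else -1) ∧ (List.ofFn e).headI = true),
          f (Fin.snoc e b) := by
  refine Finset.sum_nbij' (i := fun d => Fin.init d) (j := fun e => Fin.snoc e b)
    ?_ ?_ ?_ ?_ ?_
  · intro d hd
    simp only [Finset.mem_filter, Finset.mem_univ, true_and] at hd ⊢
    obtain ⟨h1, h2, h3⟩ := hd
    have hds : (Fin.snoc (Fin.init d) b : Fin (n+2) → Bool) = d := by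
      rw [← h3, dlast_eq]; exact Fin.snoc_init_self d
    constructor
    · have := moveEndpoint_snoc (Fin.init d) b
      rw [hds] at this; omega
    · rw [← headI_snoc (Fin.init d) b, hds]; exact h2
  · intro e he
    simp only [Finset.mem_filter, Finset.mem_univ, true_and] at he ⊢
    obtain ⟨h1, h2⟩ := he
    refine ⟨?_, ?_, dlast_snoc e b⟩
    · rw [moveEndpoint_snoc, h1]; ring
    · rw [headI_snoc]; exact h2
  · intro d hd
    simp only [Finset.mem_filter, Finset.mem_univ, true_and] at hd
    rw [← hd.2.2, dlast_eq]; exact Fin.snoc_init_self d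
  · intro e he
    simp [Fin.init_snoc]
  · intro d hd
    simp only [Finset.mem_filter, Finset.mem_univ, true_and] at hd
    congr 1
    rw [← hd.2.2, dlast_eq]; exact (Fin.snoc_init_self d).symm

lemma Gc_rec (u : ℤ → ℤ → ℝ) (x : ℤ) (n : ℕ) :
    Gc u x (n+2) = (u (x-1) ((n:ℤ)+1) : ℂ) *
      (Gc u (x-1) (n+1) + (-Complex.I) * Hc u (x-1) (n+1)) := by
  rw [Gc, sum_snoc_filter]
  have key : ∀ e ∈ Finset.univ.filter
      (fun e : Fin (n+1) → Bool =>
        moveEndpoint e = x - (if true then 1 else -1) ∧ (List.ofFn e).headI = true),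
      (-Complex.I) ^ nturns (Fin.snoc e true : Fin (n+2) → Bool) *
          (fieldWeight u (Fin.snoc e true) : ℂ)
        = (u (x-1) ((n:ℤ)+1) : ℂ) *
            (if dlast e = true then (-Complex.I) ^ nturns e * (fieldWeight u e : ℂ)
             else (-Complex.I) * ((-Complex.I) ^ nturns e * (fieldWeight u e : ℂ))) := by
    intro e he
    simp only [Finset.mem_filter, Finset.mem_univ, true_and] at he
    have he1 : moveEndpoint e = x - 1 := by
      have := he.1; simpa using this
    rw [nturns_snoc, fieldWeight_snoc, he1]
    by_cases hl : dlast e = true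
    · simp only [hl, if_true]
      push_cast
      ring
    · simp only [hl, if_false]
      push_cast
      ring
  rw [Finset.sum_congr rfl key, ← Finset.mul_sum, Finset.sum_ite, Gc, Hc, ← Finset.mul_sum]
  have hs1 : Finset.univ.filter
      (fun e : Fin (n+1) → Bool =>
        (moveEndpoint e = x - (if true then 1 else -1) ∧ (List.ofFn e).headI = true) ∧ dlast e = true)
      = Finset.univ.filter (fun e : Fin (n+1) → Bool =>
          moveEndpoint e = x - 1 ∧ (List.ofFn e).headI = true ∧ dlast e = true) := by
    ext e; simp [and_assoc]
  have hs2 : Finset.univ.filter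
      (fun e : Fin (n+1) → Bool =>
        (moveEndpoint e = x - (if true then 1 else -1) ∧ (List.ofFn e).headI = true) ∧ ¬ dlast e = true)
      = Finset.univ.filter (fun e : Fin (n+1) → Bool =>
          moveEndpoint e = x - 1 ∧ (List.ofFn e).headI = true ∧ dlast e = false) := by
    ext e; simp [and_assoc]
  rw [Finset.filter_filter, Finset.filter_filter, hs1, hs2]

lemma Hc_rec (u : ℤ → ℤ → ℝ) (x : ℤ) (n : ℕ) :
    Hc u x (n+2) = (u x ((n:ℤ)+1) : ℂ) *
      ((-Complex.I) * Gc u (x+1) (n+1) + Hc u (x+1) (n+1)) := by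
  rw [Hc, sum_snoc_filter]
  have key : ∀ e ∈ Finset.univ.filter
      (fun e : Fin (n+1) → Bool =>
        moveEndpoint e = x - (if false then 1 else -1) ∧ (List.ofFn e).headI = true),
      (-Complex.I) ^ nturns (Fin.snoc e false : Fin (n+2) → Bool) *
          (fieldWeight u (Fin.snoc e false) : ℂ)
        = (u x ((n:ℤ)+1) : ℂ) *
            (if dlast e = true then (-Complex.I) * ((-Complex.I) ^ nturns e * (fieldWeight u e : ℂ))
             else (-Complex.I) ^ nturns e * (fieldWeight u e : ℂ)) := by
    intro e he
    simp only [Finset.mem_filter, Finset.mem_univ, true_and] at he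
    have he1 : moveEndpoint e = x + 1 := by
      have := he.1; simp at this; omega
    rw [nturns_snoc, fieldWeight_snoc]
    have hm : moveEndpoint e - 1 = x := by omega
    rw [hm]
    cases hl : dlast e
    · simp only [Bool.false_eq_true, if_false, if_true]
      push_cast
      ring
    · simp only [if_true, Bool.true_eq_false, if_false]
      push_cast
      ring
  rw [Finset.sum_congr rfl key, ← Finset.mul_sum, Finset.sum_ite, Gc, Hc, ← Finset.mul_sum]
  have hs1 : Finset.univ.filter
      (fun e : Fin (n+1) → Bool =>
        (moveEndpoint e = x - (if false then 1 else -1) ∧ (List.ofFn e).headI = true) ∧ dlast e = true)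
      = Finset.univ.filter (fun e : Fin (n+1) → Bool =>
          moveEndpoint e = x + 1 ∧ (List.ofFn e).headI = true ∧ dlast e = true) := by
    ext e; simp [and_assoc, sub_neg_eq_add]
  have hs2 : Finset.univ.filter
      (fun e : Fin (n+1) → Bool =>
        (moveEndpoint e = x - (if false then 1 else -1) ∧ (List.ofFn e).headI = true) ∧ ¬ dlast e = true)
      = Finset.univ.filter (fun e : Fin (n+1) → Bool =>
          moveEndpoint e = x + 1 ∧ (List.ofFn e).headI = true ∧ dlast e = false) := by
    ext e; simp [and_assoc, sub_neg_eq_add]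
  rw [Finset.filter_filter, Finset.filter_filter, hs1, hs2]


variable {u : ℤ → ℤ → ℝ}

lemma Gc_zero (x : ℤ) : Gc u x 0 = 0 := by
  refine Finset.sum_eq_zero fun d hd => ?_
  simp only [Finset.mem_filter] at hd
  have : (List.ofFn d) = [] := by simp
  rw [this] at hd
  simp [List.headI] at hd

lemma Hc_zero (x : ℤ) : Hc u x 0 = 0 := by
  refine Finset.sum_eq_zero fun d hd => ?_
  simp only [Finset.mem_filter] at hd
  have : (List.ofFn d) = [] := by simp
  rw [this] at hd
  simp [List.headI] at hd

lemma moveEndpoint_one (d : Fin 1 → Bool) : moveEndpoint d = if d 0 then 1 else -1 := by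
  rw [moveEndpoint, Fin.sum_univ_one]

lemma Hc_one (x : ℤ) : Hc u x 1 = 0 := by
  refine Finset.sum_eq_zero fun d hd => ?_
  simp only [Finset.mem_filter] at hd
  obtain ⟨-, -, h2, h3⟩ := hd
  rw [headI_ofFn] at h2
  rw [dlast_eq] at h3
  have : Fin.last 0 = 0 := rfl
  rw [this, h2] at h3
  cases h3

lemma Gc_one (x : ℤ) : Gc u x 1 = if x = 1 then (u 0 0 : ℂ) else 0 := by
  by_cases hx : x = 1
  · subst hx
    have hset : Finset.univ.filter
        (fun d : Fin 1 → Bool => moveEndpoint d = 1 ∧ (List.ofFn d).headI = true ∧ dlast d = true)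
        = {fun _ => true} := by
      ext d
      simp only [Finset.mem_filter, Finset.mem_univ, true_and, Finset.mem_singleton]
      constructor
      · rintro ⟨h1, h2, h3⟩
        funext i
        have : i = 0 := Subsingleton.elim _ _
        rw [this, ← headI_ofFn d]
        exact h2
      · rintro rfl
        refine ⟨by rw [moveEndpoint_one]; simp, by rw [headI_ofFn], by rw [dlast_eq]⟩
    rw [Gc, hset, Finset.sum_singleton]
    have h1 : nturns (fun _ : Fin 1 => true) = 0 := by decide
    have h2 : fieldWeight u (fun _ : Fin 1 => true) = u 0 0 := by
      rw [fieldWeight, Fin.prod_univ_one]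
      have : cpos (fun _ : Fin 1 => true) 0 = 0 := by
        rw [cpos]
        refine Finset.sum_eq_zero fun j hj => ?_
        simp at hj
      simp [this]
    rw [h1, h2]
    simp
  · rw [if_neg hx]
    refine Finset.sum_eq_zero fun d hd => ?_
    simp only [Finset.mem_filter] at hd
    obtain ⟨-, h1, h2, -⟩ := hd
    rw [headI_ofFn] at h2
    rw [moveEndpoint_one, h2, if_pos rfl] at h1
    exact absurd h1.symm hx

lemma af_eq (u : ℤ → ℤ → ℝ) (x t : ℤ) :
    af u x t = (Real.sqrt 2 : ℂ) ^ (1 - t) * Complex.I *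
      (Gc u x t.toNat + Hc u x t.toNat) := by
  rw [af, cpaths]
  congr 1
  rw [← Finset.sum_filter_add_sum_filter_not
        (Finset.univ.filter fun d : Fin t.toNat → Bool =>
          moveEndpoint d = x ∧ (List.ofFn d).headI = true)
        (fun d => dlast d = true)]
  congr 1
  · rw [Gc, Finset.filter_filter]
    congr 1
    ext d
    simp [and_assoc]
  · rw [Hc, Finset.filter_filter]
    congr 1
    ext d
    simp [and_assoc]

noncomputable def gR (u : ℤ → ℤ → ℝ) (x : ℤ) (n : ℕ) : ℝ := (Gc u x n).re
noncomputable def hR (u : ℤ → ℤ → ℝ) (x : ℤ) (n : ℕ) : ℝ := -(Hc u x n).im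

lemma GH_real (u : ℤ → ℤ → ℝ) : ∀ n : ℕ, ∀ x : ℤ, (Gc u x n).im = 0 ∧ (Hc u x n).re = 0 := by
  intro n
  induction n using Nat.twoStepInduction with
  | zero => intro x; rw [Gc_zero, Hc_zero]; simp
  | one =>
    intro x
    constructor
    · rw [Gc_one]; split <;> simp
    · rw [Hc_one]; simp
  | more n _ ih =>
    intro x
    constructor
    · rw [Gc_rec]
      simp [Complex.mul_im, Complex.mul_re, (ih (x-1-1)).1, (ih (x-1)).1, (ih (x-1)).2]
    · rw [Hc_rec]
      simp [Complex.mul_im, Complex.mul_re, (ih (x+1)).1, (ih (x+1)).2]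

lemma sqrt_pow_re (t : ℤ) : ((Real.sqrt 2 : ℂ) ^ (1 - t)).re = (Real.sqrt 2) ^ (1 - t) := by
  rw [← Complex.ofReal_zpow, Complex.ofReal_re]

lemma sqrt_pow_im (t : ℤ) : ((Real.sqrt 2 : ℂ) ^ (1 - t)).im = 0 := by
  rw [← Complex.ofReal_zpow, Complex.ofReal_im]

lemma af_re (u : ℤ → ℤ → ℝ) (x t : ℤ) :
    (af u x t).re = (Real.sqrt 2) ^ (1 - t) * hR u x t.toNat := by
  rw [af_eq, mul_assoc]
  simp only [Complex.mul_re, Complex.mul_im, sqrt_pow_re, sqrt_pow_im, Complex.I_re,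
    Complex.I_im, Complex.add_re, Complex.add_im, (GH_real u t.toNat x).1, hR]
  ring

lemma af_im (u : ℤ → ℤ → ℝ) (x t : ℤ) :
    (af u x t).im = (Real.sqrt 2) ^ (1 - t) * gR u x t.toNat := by
  rw [af_eq, mul_assoc]
  simp only [Complex.mul_re, Complex.mul_im, sqrt_pow_re, sqrt_pow_im, Complex.I_re,
    Complex.I_im, Complex.add_re, Complex.add_im, (GH_real u t.toNat x).2, gR]
  ring

lemma gR_rec (u : ℤ → ℤ → ℝ) (x : ℤ) (n : ℕ) :
    gR u x (n+2) = u (x-1) ((n:ℤ)+1) * (gR u (x-1) (n+1) - hR u (x-1) (n+1)) := by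
  rw [gR, Gc_rec]
  simp only [Complex.mul_re, Complex.mul_im, Complex.add_re, Complex.add_im, Complex.neg_re,
    Complex.neg_im, Complex.I_re, Complex.I_im, Complex.ofReal_re, Complex.ofReal_im, gR, hR]
  ring

lemma hR_rec (u : ℤ → ℤ → ℝ) (x : ℤ) (n : ℕ) :
    hR u x (n+2) = u x ((n:ℤ)+1) * (gR u (x+1) (n+1) + hR u (x+1) (n+1)) := by
  rw [hR, Hc_rec]
  simp only [Complex.mul_re, Complex.mul_im, Complex.add_re, Complex.add_im, Complex.neg_re,
    Complex.neg_im, Complex.I_re, Complex.I_im, Complex.mul_im, Complex.ofReal_re,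
    Complex.ofReal_im, gR, hR]
  ring

lemma gR_zero (x : ℤ) : gR u x 0 = 0 := by rw [gR, Gc_zero]; rfl
lemma hR_zero (x : ℤ) : hR u x 0 = 0 := by rw [hR, Hc_zero]; simp
lemma hR_one (x : ℤ) : hR u x 1 = 0 := by rw [hR, Hc_one]; simp
lemma gR_one (x : ℤ) : gR u x 1 = if x = 1 then u 0 0 else 0 := by
  rw [gR, Gc_one]; split <;> simp


section Field
variable {u : ℤ → ℤ → ℝ} (hu : ∀ x t : ℤ, u x t = (-1 : ℝ) ^ ((x - 1) * (t - 1)))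
include hu

lemma uval_one_left {a : ℤ} (b : ℤ) (ha : a % 2 = 1) : u a b = 1 := by
  rw [hu]
  refine Even.neg_one_zpow ?_
  rw [Int.even_mul]
  left
  rw [Int.even_iff]
  omega

lemma uval_one_right (a : ℤ) {b : ℤ} (hb : b % 2 = 1) : u a b = 1 := by
  rw [hu]
  refine Even.neg_one_zpow ?_
  rw [Int.even_mul]
  right
  rw [Int.even_iff]
  omega

lemma uval_neg {a b : ℤ} (ha : a % 2 = 0) (hb : b % 2 = 0) : u a b = -1 := by
  rw [hu]
  refine Odd.neg_one_zpow ?_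
  rw [Int.odd_mul, Int.odd_iff, Int.odd_iff]
  omega

lemma u00 : u 0 0 = -1 := uval_neg hu rfl rfl

/-- the key invariant, proven by induction on `k` -/
lemma inv : ∀ k : ℕ, ∀ x : ℤ, (x + 2*(k:ℤ)) % 4 = 2 →
    gR u x (2*k) = 0 ∧ gR u (x+2) (2*k) + hR u (x+2) (2*k) = hR u x (2*k) := by
  intro k
  induction k with
  | zero => intro x hx; simp [gR_zero, hR_zero]
  | succ m ih =>
    intro x hx
    push_cast at hx
    cases m with
    | zero =>
      replace hx : (x + 2) % 4 = 2 := by simpa using hx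
      have hne1 : ¬ (x - 1 = 1) := by omega
      have hne2 : ¬ (x + 3 = 1) := by omega
      have e0 : u (x-1) (((0:ℕ):ℤ)+1) = 1 := uval_one_left hu _ (by omega)
      have e1 : u (x+1) (((0:ℕ):ℤ)+1) = 1 := uval_one_left hu _ (by omega)
      have e2 : u (x+2) (((0:ℕ):ℤ)+1) = 1 := uval_one_right hu _ (by norm_num)
      have e3 : u x (((0:ℕ):ℤ)+1) = 1 := uval_one_right hu _ (by norm_num)
      constructor
      · rw [show (2*(0+1) : ℕ) = 0+2 from rfl, gR_rec, e0]
        norm_num [gR_one, hR_one, hne1]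
      · rw [show (2*(0+1) : ℕ) = 0+2 from rfl, gR_rec, hR_rec, hR_rec,
          show x+2-1 = x+1 from by ring, show x+2+1 = x+3 from by ring, e1, e2, e3]
        norm_num [gR_one, hR_one, hne2]
    | succ l =>
      set m := l + 1 with hm
      have hxe : x % 2 = 0 := by omega
      have h22 : 2*(m+1) = (2*m) + 2 := by ring
      have e1 : 2*m+1 = (2*l+1)+2 := by omega
      have e2 : (2*l+1)+1 = 2*m := by omega
      have hcast : ((2*l+1 : ℕ) : ℤ) + 1 = 2*(m:ℤ) := by push_cast; omega
      -- the odd intermediate level values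
      have hga : gR u (x+1) (2*m+1) = - gR u x (2*m) + hR u x (2*m) := by
        rw [e1, gR_rec, e2, show x + 1 - 1 = x from by ring, hcast,
          uval_neg hu hxe (by omega)]
        ring
      have hha : hR u (x-1) (2*m+1) = gR u x (2*m) + hR u x (2*m) := by
        rw [e1, hR_rec, e2, show x - 1 + 1 = x from by ring, hcast,
          uval_one_left hu _ (by omega)]
        ring
      have hgb : gR u (x+3) (2*m+1) = - gR u (x+2) (2*m) + hR u (x+2) (2*m) := by
        rw [e1, gR_rec, e2, show x + 3 - 1 = x + 2 from by ring, hcast,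
          uval_neg hu (by omega) (by omega)]
        ring
      have hhb : hR u (x+1) (2*m+1) = gR u (x+2) (2*m) + hR u (x+2) (2*m) := by
        rw [e1, hR_rec, e2, show x + 1 + 1 = x + 2 from by ring, hcast,
          uval_one_left hu _ (by omega)]
        ring
      have hhc : hR u (x+3) (2*m+1) = gR u (x+4) (2*m) + hR u (x+4) (2*m) := by
        rw [e1, hR_rec, e2, show x + 3 + 1 = x + 4 from by ring, hcast,
          uval_one_left hu _ (by omega)]
        ring
      have hgm : gR u (x-1) (2*m+1) = - gR u (x-2) (2*m) + hR u (x-2) (2*m) := by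
        rw [e1, gR_rec, e2, show x - 1 - 1 = x - 2 from by ring, hcast,
          uval_neg hu (by omega) (by omega)]
        ring
      -- invariants one level down
      have ihm : gR u (x-2) (2*m) = 0 ∧ gR u x (2*m) + hR u x (2*m) = hR u (x-2) (2*m) := by
        have h := ih (x-2) (by push_cast; omega)
        rwa [show x-2+2 = x from by ring] at h
      have ihp : gR u (x+2) (2*m) = 0 ∧ gR u (x+4) (2*m) + hR u (x+4) (2*m) = hR u (x+2) (2*m) := by
        have h := ih (x+2) (by push_cast; omega)
        rwa [show x+2+2 = x+4 from by ring] at h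
      -- level 2m+1 -> 2m+2 recurrences
      have hodd1 : u (x-1) (((2*m:ℕ):ℤ)+1) = 1 := uval_one_left hu _ (by omega)
      have hodd2 : u x (((2*m:ℕ):ℤ)+1) = 1 := uval_one_right hu _ (by push_cast; omega)
      have hodd3 : u (x+1) (((2*m:ℕ):ℤ)+1) = 1 := uval_one_left hu _ (by omega)
      have hodd4 : u (x+2) (((2*m:ℕ):ℤ)+1) = 1 := uval_one_right hu _ (by push_cast; omega)
      have hx2 : x + 2 - 1 = x + 1 := by ring
      have hx3 : x + 2 + 1 = x + 3 := by ring
      constructor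
      · rw [h22, gR_rec, hodd1, hgm, hha]
        linarith [ihm.1, ihm.2]
      · rw [h22, gR_rec, hR_rec, hR_rec, hx2, hx3, hodd2, hodd3, hodd4,
          hga, hhb, hgb, hhc]
        linarith [ihm.1, ihm.2, ihp.1, ihp.2]

lemma L1 (k : ℕ) (x : ℤ) (hx : (x + 2*(k:ℤ)) % 4 = 2) :
    gR u (x+1) (2*k+1) = hR u x (2*k) ∧ hR u (x-1) (2*k+1) = hR u x (2*k) ∧
      hR u (x+1) (2*k+1) = hR u x (2*k) := by
  cases k with
  | zero =>
    replace hx : x % 4 = 2 := by simpa using hx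
    have hne : ¬ (x + 1 = 1) := by omega
    norm_num [gR_one, hR_one, hR_zero, hne]
  | succ l =>
    have hxe : x % 2 = 0 := by push_cast at hx; omega
    have e1 : 2*(l+1)+1 = (2*l+1)+2 := by omega
    have e2 : (2*l+1)+1 = 2*(l+1) := by omega
    have hcast : ((2*l+1:ℕ):ℤ)+1 = 2*((l:ℤ)+1) := by push_cast; ring
    have hinv := inv hu (l+1) x hx
    refine ⟨?_, ?_, ?_⟩
    · rw [e1, gR_rec, e2, show x + 1 - 1 = x from by ring, hcast,
        uval_neg hu hxe (by omega)]
      linarith [hinv.1]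
    · rw [e1, hR_rec, e2, show x - 1 + 1 = x from by ring, hcast,
        uval_one_left hu _ (by omega)]
      linarith [hinv.1]
    · rw [e1, hR_rec, e2, show x + 1 + 1 = x + 2 from by ring, hcast,
        uval_one_left hu _ (by omega)]
      linarith [hinv.2]

end Field

end DR

/-- Linear relations in diamonds for the homogeneous magnetic field
`u(x+1/2, t+1/2) = (-1)^((x-1)(t-1))`. -/
theorem diamond_relations (u : ℤ → ℤ → ℝ)
    (hu : ∀ x t : ℤ, u x t = (-1 : ℝ) ^ ((x - 1) * (t - 1)))
    (x t : ℤ) (ht : 1 ≤ t)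
    (hxt : (x % 4 = 2 ∧ t % 4 = 1) ∨ (x % 4 = 0 ∧ t % 4 = 3)) :
    (Real.sqrt 2 * (af u (x + 1) t).re = (af u x (t - 1)).re ∧
     (af u x (t - 1)).re = Real.sqrt 2 * (af u (x - 1) t).re ∧
     Real.sqrt 2 * (af u (x - 1) t).re = (af u x (t + 1)).re ∧
     (af u x (t + 1)).re = Real.sqrt 2 * (af u (x + 1) t).im ∧
     Real.sqrt 2 * (af u (x + 1) t).im =
       Real.sqrt 2 * (af u (x - 1) t).im - 2 * (af u x (t + 1)).im) ∧
    (af u x (t - 1)).im = 0 := by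
  open DR in
  have htodd : t % 2 = 1 := by rcases hxt with ⟨-, h⟩ | ⟨-, h⟩ <;> omega
  have hnt : (t.toNat : ℤ) = t := Int.toNat_of_nonneg (by omega)
  obtain ⟨k, hk⟩ : ∃ k : ℕ, t.toNat = 2*k+1 := ⟨t.toNat / 2, by omega⟩
  have hkt : 2*(k:ℤ) = t - 1 := by omega
  have cond : (x + 2*(k:ℤ)) % 4 = 2 := by
    rcases hxt with ⟨h1, h2⟩ | ⟨h1, h2⟩ <;> omega
  have hxe : x % 2 = 0 := by omega
  have hL := DR.L1 hu k x cond
  have hI := (DR.inv hu k x cond).1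
  have htop : hR u x (2*k+2) = 2 * hR u x (2*k) := by
    rw [hR_rec, uval_one_right hu _ (by push_cast; omega), hL.1, hL.2.2]
    ring
  have gtop : gR u x (2*k+2) = gR u (x-1) (2*k+1) - hR u x (2*k) := by
    rw [gR_rec, uval_one_left hu _ (by omega), hL.2.1]
    ring
  have htm : (t-1).toNat = 2*k := by omega
  have htp : (t+1).toNat = 2*k+2 := by omega
  have hs0 : (0:ℝ) < Real.sqrt 2 := Real.sqrt_pos.mpr (by norm_num)
  have hs2 : Real.sqrt 2 * Real.sqrt 2 = 2 := Real.mul_self_sqrt (by norm_num)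
  have hinv2 : (Real.sqrt 2)⁻¹ * 2 = Real.sqrt 2 := by
    field_simp
    rw [sq, hs2]
  have er1 : Real.sqrt 2 ^ (1-(t-1)) = Real.sqrt 2 * Real.sqrt 2 ^ (1-t) := by
    rw [show 1-(t-1) = (1-t)+1 from by ring, zpow_add_one₀ (ne_of_gt hs0)]
    ring
  have er2 : Real.sqrt 2 ^ (1-(t+1)) = Real.sqrt 2 ^ (1-t) * (Real.sqrt 2)⁻¹ := by
    rw [show 1-(t+1) = (1-t)-1 from by ring, zpow_sub_one₀ (ne_of_gt hs0)]
  refine ⟨⟨?_, ?_, ?_, ?_, ?_⟩, ?_⟩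
  · rw [af_re, af_re, hk, htm, er1, hL.2.2]
    try ring
  · rw [af_re, af_re, hk, htm, er1, hL.2.1]
    try ring
  · rw [af_re, af_re, hk, htp, er2, hL.2.1, htop]
    linear_combination (-(Real.sqrt 2 ^ (1-t) * hR u x (2*k))) * hinv2
  · rw [af_re, af_im, hk, htp, er2, hL.1, htop]
    linear_combination (Real.sqrt 2 ^ (1-t) * hR u x (2*k)) * hinv2
  · rw [af_im, af_im, af_im, hk, htp, er2, hL.1, gtop]
    linear_combination (Real.sqrt 2 ^ (1-t) * gR u (x-1) (2*k+1)
      - Real.sqrt 2 ^ (1-t) * hR u x (2*k)) * hinv2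
  · rw [af_im, htm, hI]
    ring
end
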